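/- arXiv:2112.02089 — 5 statements merged into one kernel-verified Lean document; each statement's English description precedes it below -/
import Mathlib

section
/- Let {α_k}_{k≥0} be a sequence of nonnegative real numbers satisfying α_{k+1} ≤ α_k − (2/3)·α_k^{3/2} for all k ≥ 0. Then for every k ≥ 0, α_{k+1} ≤ 1/(1 + k/3)². -/
lemma rpow32 (x : ℝ) (hx : 0 ≤ x) : x ^ ((3:ℝ)/2) = Real.sqrt x ^ 3 := by
  rw [show ((3:ℝ)/2) = (1/2) * 3 by ring, Real.rpow_mul hx, ← Real.sqrt_eq_rpow]
  exact_mod_cast Real.rpow_natCast (Real.sqrt x) 3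

lemma keybase (x : ℝ) (hx : 0 ≤ x) : x - (2/3) * x ^ ((3:ℝ)/2) ≤ 1/3 := by
  have hs0 := Real.sqrt_nonneg x
  have hs2 : Real.sqrt x ^ 2 = x := Real.sq_sqrt hx
  rw [rpow32 x hx]
  nlinarith [mul_nonneg (sq_nonneg (Real.sqrt x - 1)) hs0, sq_nonneg (Real.sqrt x - 1)]

lemma keystep (x t : ℝ) (hx : 0 ≤ x) (ht : 1 ≤ t) (hxt : x ≤ 1 / t ^ 2) :
    x - (2/3) * x ^ ((3:ℝ)/2) ≤ 1 / (t + 1/3) ^ 2 := by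
  have ht0 : 0 < t := by linarith
  have hs0 := Real.sqrt_nonneg x
  have hs2 : Real.sqrt x ^ 2 = x := Real.sq_sqrt hx
  set s := Real.sqrt x with hs
  have h1 : x * t ^ 2 ≤ 1 := by
    have := (le_div_iff₀ (by positivity : (0:ℝ) < t ^ 2)).mp hxt
    linarith
  have hst : s * t ≤ 1 := by nlinarith [mul_nonneg hs0 ht0.le]
  have hst0 : 0 ≤ s * t := mul_nonneg hs0 ht0.le
  have hgt : 0 < (t + 1/3) ^ 2 := by positivity
  rw [rpow32 x hx, ← hs, le_div_iff₀ hgt, ← hs2]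
  have hA : s ^ 2 - (2/3) * s ^ 3 ≤ 1 / t ^ 2 - 2 / (3 * t ^ 3) := by
    rw [div_sub_div _ _ (by positivity) (by positivity), le_div_iff₀ (by positivity : (0:ℝ) < t^2 * (3*t^3))]
    nlinarith [mul_nonneg (mul_nonneg (sq_nonneg (1 - s*t)) hst0) ht0.le,
      sq_nonneg (1 - s*t), mul_nonneg (sub_nonneg.2 ht) (mul_nonneg (sub_nonneg.2 hst) (by linarith : (0:ℝ) ≤ 1 + s*t)),
      pow_pos ht0 3, pow_pos ht0 2]
  have hB : 1 / t ^ 2 - 2 / (3 * t ^ 3) ≤ 1 / (t + 1/3) ^ 2 := by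
    rw [div_sub_div _ _ (by positivity) (by positivity), div_le_div_iff₀ (by positivity) hgt]
    nlinarith [pow_pos ht0 3, pow_pos ht0 2]
  calc (s^2 - 2/3 * s^3) * (t + 1/3)^2 ≤ (1 / t ^ 2 - 2 / (3 * t ^ 3)) * (t+1/3)^2 := by
        nlinarith [hA, hgt]
    _ ≤ 1 := by rw [← le_div_iff₀ hgt] ; exact hB

/-- If a nonnegative real sequence satisfies
`α_{k+1} ≤ α_k − (2/3) α_k^{3/2}` for all `k`, then `α_{k+1} ≤ 1/(1 + k/3)²`. -/
theorem stmt_7 (α : ℕ → ℝ) (hnonneg : ∀ k, 0 ≤ α k)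
    (hrec : ∀ k, α (k + 1) ≤ α k - (2 / 3) * α k ^ ((3 : ℝ) / 2)) :
    ∀ k : ℕ, α (k + 1) ≤ 1 / (1 + (k : ℝ) / 3) ^ 2 := by
  intro k
  induction k with
  | zero =>
    have := (hrec 0).trans (keybase (α 0) (hnonneg 0))
    norm_num
    linarith
  | succ n ih =>
    have ht : (1:ℝ) ≤ 1 + (n:ℝ)/3 := by
      have : (0:ℝ) ≤ (n:ℝ) := Nat.cast_nonneg n; linarith
    have := (hrec (n+1)).trans (keystep (α (n+1)) (1 + (n:ℝ)/3) (hnonneg (n+1)) ht ih)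
    have heq : 1 + ((n:ℕ)+1 : ℝ)/3 = (1 + (n:ℝ)/3) + 1/3 := by ring
    push_cast
    rw [heq]
    exact this
end

section
/- Let f : ℝ^d → ℝ be twice differentiable and μ-strongly convex (∇²f(x) − μ·I positive semidefinite for all x, μ > 0), with second-order error bound ‖∇f(y) − ∇f(x) − ∇²f(x)(y − x)‖ ≤ H‖y − x‖² for all x, y ∈ ℝ^d, where H > 0. Let {x^k}_{k≥0} satisfy, for every k, (∇²f(x^k) + λ_k·I)(x^{k+1} − x^k) = −∇f(x^k) with λ_k = √(H‖∇f(x^k)‖). If for some index k₀ it holds that ‖∇f(x^{k₀})‖ ≤ μ²/(4H), then for every k ≥ k₀ we have ‖∇f(x^{k+1})‖ ≤ (2√H/μ)·‖∇f(x^k)‖^{3/2} and ‖∇f(x^k)‖ ≤ μ²/(4H). -/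
open RealInnerProductSpace

/-- Local superlinear convergence. If `f` is μ-strongly convex with
H-bounded second-order error and `‖∇f(x^{k₀})‖ ≤ μ²/(4H)`, then for all `k ≥ k₀`,
`‖∇f(x^{k+1})‖ ≤ (2√H/μ)‖∇f(x^k)‖^{3/2}` and `‖∇f(x^k)‖ ≤ μ²/(4H)`. -/
theorem stmt_11 {d : ℕ} (f : EuclideanSpace ℝ (Fin d) → ℝ)
    (hf : Differentiable ℝ f) (hf' : Differentiable ℝ (gradient f))
    (μ : ℝ) (hμ : 0 < μ)
    (hsc : ∀ x v : EuclideanSpace ℝ (Fin d),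
      0 ≤ ⟪fderiv ℝ (gradient f) x v - μ • v, v⟫)
    (H : ℝ) (hH : 0 < H)
    (herr : ∀ x y : EuclideanSpace ℝ (Fin d),
      ‖gradient f y - gradient f x - fderiv ℝ (gradient f) x (y - x)‖ ≤ H * ‖y - x‖ ^ 2)
    (x : ℕ → EuclideanSpace ℝ (Fin d))
    (lam : ℕ → ℝ)
    (hlam : ∀ k, lam k = Real.sqrt (H * ‖gradient f (x k)‖))
    (hstep : ∀ k, fderiv ℝ (gradient f) (x k) (x (k + 1) - x k)
      + lam k • (x (k + 1) - x k) = -gradient f (x k))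
    (k₀ : ℕ) (hk₀ : ‖gradient f (x k₀)‖ ≤ μ ^ 2 / (4 * H)) :
    ∀ k : ℕ, k₀ ≤ k →
      ‖gradient f (x (k + 1))‖ ≤ (2 * Real.sqrt H / μ) * ‖gradient f (x k)‖ ^ ((3 : ℝ) / 2)
        ∧ ‖gradient f (x k)‖ ≤ μ ^ 2 / (4 * H) := by
  have hlamnn : ∀ k, 0 ≤ lam k := fun k => (hlam k) ▸ Real.sqrt_nonneg _
  have hlamsq : ∀ k, lam k ^ 2 = H * ‖gradient f (x k)‖ := fun k => by
    rw [hlam]; exact Real.sq_sqrt (by positivity)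
  -- key one-step bound
  have key : ∀ k, ‖gradient f (x (k + 1))‖ ≤
      2 * lam k * ‖gradient f (x k)‖ / μ := by
    intro k
    set A := fderiv ℝ (gradient f) (x k) with hAdef
    set Δ := x (k + 1) - x k with hΔdef
    set g := gradient f (x k) with hgdef
    set g' := gradient f (x (k + 1)) with hg'def
    set lk := lam k with hlkdef
    have hAΔ : A Δ = -g - lk • Δ := eq_sub_of_add_eq (hstep k)
    -- strong convexity
    have h1 : μ * ‖Δ‖ ^ 2 ≤ ⟪A Δ, Δ⟫ := by
      have := hsc (x k) Δ
      rw [inner_sub_left, real_inner_smul_left, real_inner_self_eq_norm_sq] at this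
      linarith
    -- inner product of step equation with Δ
    have h2 : ⟪A Δ, Δ⟫ = ⟪-g, Δ⟫ - lk * ‖Δ‖ ^ 2 := by
      rw [hAΔ, inner_sub_left, real_inner_smul_left, real_inner_self_eq_norm_sq]
    have h3 : ⟪-g, Δ⟫ ≤ ‖g‖ * ‖Δ‖ := by
      calc ⟪-g, Δ⟫ ≤ ‖(-g : EuclideanSpace ℝ (Fin d))‖ * ‖Δ‖ := real_inner_le_norm _ _
        _ = ‖g‖ * ‖Δ‖ := by rw [norm_neg]
    have hΔle : (μ + lk) * ‖Δ‖ ≤ ‖g‖ := by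
      rcases eq_or_lt_of_le (norm_nonneg Δ) with h0 | h0
      · rw [← h0]; simpa using norm_nonneg g
      · have hsum : (μ + lk) * ‖Δ‖ * ‖Δ‖ ≤ ‖g‖ * ‖Δ‖ := by nlinarith
        exact le_of_mul_le_mul_right hsum h0
    -- error bound
    have herr' : ‖g' + lk • Δ‖ ≤ H * ‖Δ‖ ^ 2 := by
      have h := herr (x k) (x (k + 1))
      rw [← hΔdef] at h
      have : g' - g - A Δ = g' + lk • Δ := by rw [hAΔ]; abel
      rwa [this] at h
    have hg' : ‖g'‖ ≤ H * ‖Δ‖ ^ 2 + lk * ‖Δ‖ := by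
      calc ‖g'‖ = ‖(g' + lk • Δ) - lk • Δ‖ := by rw [add_sub_cancel_right]
        _ ≤ ‖g' + lk • Δ‖ + ‖lk • Δ‖ := norm_sub_le _ _
        _ ≤ H * ‖Δ‖ ^ 2 + lk * ‖Δ‖ := by
            rw [norm_smul, Real.norm_eq_abs, abs_of_nonneg (hlamnn k)]
            exact add_le_add herr' le_rfl
    -- arithmetic
    have hlk2 : lk ^ 2 = H * ‖g‖ := hlamsq k
    have ht : (0:ℝ) ≤ ‖Δ‖ := norm_nonneg _
    have hG : (0:ℝ) ≤ ‖g‖ := norm_nonneg _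
    have hlknn : 0 ≤ lk := hlamnn k
    rw [le_div_iff₀ hμ]
    nlinarith [mul_le_mul_of_nonneg_left hΔle (mul_nonneg hH.le ht),
      mul_le_mul_of_nonneg_left hΔle hlknn,
      mul_le_mul_of_nonneg_left hg' hμ.le,
      mul_nonneg hlknn hG,
      mul_nonneg (mul_nonneg hH.le hlknn) (mul_nonneg ht ht)]
  -- invariant by induction
  have hinv : ∀ k, k₀ ≤ k → ‖gradient f (x k)‖ ≤ μ ^ 2 / (4 * H) := by
    intro k hk
    induction k, hk using Nat.le_induction with
    | base => exact hk₀
    | succ n hn ih =>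
      have hkey := key n
      have hG : (0:ℝ) ≤ ‖gradient f (x n)‖ := norm_nonneg _
      have hlamle : lam n ≤ μ / 2 := by
        rw [hlam]
        have : H * ‖gradient f (x n)‖ ≤ (μ / 2) ^ 2 := by
          calc H * ‖gradient f (x n)‖ ≤ H * (μ ^ 2 / (4 * H)) := by
                exact mul_le_mul_of_nonneg_left ih hH.le
            _ = (μ / 2) ^ 2 := by field_simp; ring
        calc Real.sqrt (H * ‖gradient f (x n)‖) ≤ Real.sqrt ((μ / 2) ^ 2) :=
              Real.sqrt_le_sqrt this
          _ = μ / 2 := Real.sqrt_sq (by linarith)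
      have : 2 * lam n * ‖gradient f (x n)‖ / μ ≤ ‖gradient f (x n)‖ := by
        rw [div_le_iff₀ hμ]
        nlinarith
      linarith
  intro k hk
  refine ⟨?_, hinv k hk⟩
  have hkey := key k
  have hG : (0:ℝ) ≤ ‖gradient f (x k)‖ := norm_nonneg _
  have heq : 2 * lam k * ‖gradient f (x k)‖ / μ
      = (2 * Real.sqrt H / μ) * ‖gradient f (x k)‖ ^ ((3 : ℝ) / 2) := by
    rw [hlam, Real.sqrt_mul hH.le]
    have h32 : ‖gradient f (x k)‖ ^ ((3 : ℝ) / 2)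
        = Real.sqrt ‖gradient f (x k)‖ * ‖gradient f (x k)‖ := by
      rw [Real.sqrt_eq_rpow, show (3:ℝ)/2 = 1/2 + 1 by norm_num,
        Real.rpow_add' hG (by norm_num), Real.rpow_one]
    rw [h32]; ring
  linarith [heq ▸ hkey]
end

section
/- Let F : ℝ^d → ℝ^m be differentiable with Jacobian ∂F, let c > 0, and assume the cubic growth bound ‖F(y)‖² ≤ ‖F(x) + ∂F(x)(y − x)‖² + c‖y − x‖³ for all x, y ∈ ℝ^d. Suppose x, x⁺ ∈ ℝ^d satisfy (J^T J + λ·I)(x⁺ − x) = −J^T F(x) with J = ∂F(x) and λ = √(c‖J^T F(x)‖) > 0. Then ‖F(x⁺)‖² ≤ ‖F(x)‖² − λ‖x⁺ − x‖²; in particular ‖F(x⁺)‖ ≤ ‖F(x)‖. -/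
/-- Under the cubic growth bound, the LM step with
`λ = √(c‖Jᵀ F(x)‖) > 0` satisfies `‖F(x⁺)‖² ≤ ‖F(x)‖² − λ‖x⁺ − x‖²`, and in
particular `‖F(x⁺)‖ ≤ ‖F(x)‖`. -/
theorem stmt_16 {d m : ℕ}
    (F : EuclideanSpace ℝ (Fin d) → EuclideanSpace ℝ (Fin m))
    (hF : Differentiable ℝ F)
    (c : ℝ) (hc : 0 < c)
    (hcub : ∀ x y : EuclideanSpace ℝ (Fin d),
      ‖F y‖ ^ 2 ≤ ‖F x + (fderiv ℝ F x) (y - x)‖ ^ 2 + c * ‖y - x‖ ^ 3)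
    (x xp : EuclideanSpace ℝ (Fin d)) (lam : ℝ)
    (hlam : lam = Real.sqrt (c * ‖(ContinuousLinearMap.adjoint (fderiv ℝ F x)) (F x)‖))
    (hlampos : 0 < lam)
    (hstep : (ContinuousLinearMap.adjoint (fderiv ℝ F x)) ((fderiv ℝ F x) (xp - x))
        + lam • (xp - x)
      = -(ContinuousLinearMap.adjoint (fderiv ℝ F x)) (F x)) :
    ‖F xp‖ ^ 2 ≤ ‖F x‖ ^ 2 - lam * ‖xp - x‖ ^ 2 ∧ ‖F xp‖ ≤ ‖F x‖ := by
  set J := fderiv ℝ F x with hJ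
  set s : EuclideanSpace ℝ (Fin d) := xp - x with hs
  set g := (ContinuousLinearMap.adjoint J) (F x) with hg
  -- λ² = c ‖g‖
  have hgnn : (0:ℝ) ≤ c * ‖g‖ := mul_nonneg hc.le (norm_nonneg _)
  have hlamsq : lam ^ 2 = c * ‖g‖ := by
    rw [hlam, Real.sq_sqrt hgnn]
  -- inner product of step equation with s
  have hinner : ‖J s‖ ^ 2 + lam * ‖s‖ ^ 2 = - inner ℝ g s := by
    have h := congrArg (fun v => (inner ℝ v s : ℝ)) hstep
    simp only [inner_add_left, inner_smul_left, inner_neg_left,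
      RCLike.conj_to_real] at h
    rw [ContinuousLinearMap.adjoint_inner_left] at h
    simp only [real_inner_self_eq_norm_sq] at h ⊢
    linarith [h]
  -- ⟪F x, J s⟫ = ⟪g, s⟫
  have hFxJs : (inner ℝ (F x) (J s) : ℝ) = inner ℝ g s := by
    rw [hg, ContinuousLinearMap.adjoint_inner_left]
  -- Cauchy–Schwarz: -⟪g,s⟫ ≤ ‖g‖ ‖s‖
  have hCS : - (inner ℝ g s : ℝ) ≤ ‖g‖ * ‖s‖ := by
    have := abs_real_inner_le_norm g s
    have h2 := neg_abs_le (inner ℝ g s : ℝ)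
    linarith [this, h2]
  -- λ ‖s‖ ≤ ‖g‖
  have hslam : lam * ‖s‖ ≤ ‖g‖ := by
    rcases eq_or_lt_of_le (norm_nonneg s) with h0 | h0
    · rw [← h0]; simpa using norm_nonneg g
    · have h1 : lam * ‖s‖ * ‖s‖ ≤ ‖g‖ * ‖s‖ := by
        nlinarith [sq_nonneg ‖J s‖, hinner, hCS]
      exact le_of_mul_le_mul_right h1 h0
  -- c ‖s‖ ≤ λ
  have hcs : c * ‖s‖ ≤ lam := by
    have h1 : c * (lam * ‖s‖) ≤ c * ‖g‖ := mul_le_mul_of_nonneg_left hslam hc.le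
    have h2 : lam * (c * ‖s‖) ≤ lam * lam := by
      calc lam * (c * ‖s‖) = c * (lam * ‖s‖) := by ring
        _ ≤ c * ‖g‖ := h1
        _ = lam * lam := by rw [← hlamsq]; ring
    exact le_of_mul_le_mul_left h2 hlampos
  -- cubic term bound
  have hcub3 : c * ‖s‖ ^ 3 ≤ lam * ‖s‖ ^ 2 := by
    nlinarith [sq_nonneg ‖s‖, norm_nonneg s, hcs]
  -- expand model norm
  have hmodel : ‖F x + J s‖ ^ 2 = ‖F x‖ ^ 2 - ‖J s‖ ^ 2 - 2 * lam * ‖s‖ ^ 2 := by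
    have hexp := norm_add_sq_real (F x) (J s)
    rw [hFxJs] at hexp
    linarith [hexp, hinner]
  have hmain : ‖F xp‖ ^ 2 ≤ ‖F x‖ ^ 2 - lam * ‖s‖ ^ 2 := by
    have h := hcub x xp
    rw [← hs, ← hJ] at h
    linarith [h, hmodel, hcub3, sq_nonneg ‖J s‖]
  refine ⟨hmain, ?_⟩
  have hpos : 0 ≤ lam * ‖s‖ ^ 2 := mul_nonneg hlampos.le (sq_nonneg _)
  have hsq : ‖F xp‖ ^ 2 ≤ ‖F x‖ ^ 2 := by linarith
  exact (pow_le_pow_iff_left₀ (norm_nonneg _) (norm_nonneg _) two_ne_zero).mp hsq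
end

section
/- Let F : ℝ^d → ℝ^m be differentiable with Jacobian ∂F, and assume for constants J, H, c > 0 that ‖∂F(x)‖ ≤ J (operator norm), ‖F(y) − F(x) − ∂F(x)(y − x)‖ ≤ H‖y − x‖², ‖∂F(y) − ∂F(x)‖ ≤ H‖y − x‖, and ‖F(y)‖² ≤ ‖F(x) + ∂F(x)(y − x)‖² + c‖y − x‖³, for all x, y ∈ ℝ^d. Let {x^k}_{k≥0} satisfy, for every k, (J_k^T J_k + λ_k·I)(x^{k+1} − x^k) = −J_k^T F(x^k), where J_k = ∂F(x^k) and λ_k = √(c‖J_k^T F(x^k)‖) > 0. Then the sequence ‖F(x^k)‖ is nonincreasing, and there exists a constant C > 0 such that for all k ≥ 2, min_{t ≤ k} ‖J_t^T F(x^t)‖ ≤ C·(log k)/k^{2/5}. -/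
set_option maxHeartbeats 1000000


/-- Global convergence of the Levenberg–Marquardt algorithm: the
residual norms `‖F(x^k)‖` are nonincreasing, and
`min_{t ≤ k} ‖J_tᵀ F(x^t)‖ ≤ C (log k)/k^{2/5}` for all `k ≥ 2` and some `C > 0`. -/
theorem stmt_17 {d m : ℕ}
    (F : EuclideanSpace ℝ (Fin d) → EuclideanSpace ℝ (Fin m))
    (hF : Differentiable ℝ F)
    (J H c : ℝ) (hJ : 0 < J) (hH : 0 < H) (hc : 0 < c)
    (hJbound : ∀ x, ‖fderiv ℝ F x‖ ≤ J)
    (herr : ∀ x y : EuclideanSpace ℝ (Fin d),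
      ‖F y - F x - (fderiv ℝ F x) (y - x)‖ ≤ H * ‖y - x‖ ^ 2)
    (hlip : ∀ x y : EuclideanSpace ℝ (Fin d),
      ‖fderiv ℝ F y - fderiv ℝ F x‖ ≤ H * ‖y - x‖)
    (hcub : ∀ x y : EuclideanSpace ℝ (Fin d),
      ‖F y‖ ^ 2 ≤ ‖F x + (fderiv ℝ F x) (y - x)‖ ^ 2 + c * ‖y - x‖ ^ 3)
    (x : ℕ → EuclideanSpace ℝ (Fin d))
    (lam : ℕ → ℝ)
    (hlam : ∀ k, lam k
      = Real.sqrt (c * ‖(ContinuousLinearMap.adjoint (fderiv ℝ F (x k))) (F (x k))‖))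
    (hlampos : ∀ k, 0 < lam k)
    (hstep : ∀ k,
      (ContinuousLinearMap.adjoint (fderiv ℝ F (x k))) ((fderiv ℝ F (x k)) (x (k + 1) - x k))
        + lam k • (x (k + 1) - x k)
      = -(ContinuousLinearMap.adjoint (fderiv ℝ F (x k))) (F (x k))) :
    (∀ k : ℕ, ‖F (x (k + 1))‖ ≤ ‖F (x k)‖) ∧
      ∃ C : ℝ, 0 < C ∧ ∀ k : ℕ, 2 ≤ k →
        ∃ t ≤ k, ‖(ContinuousLinearMap.adjoint (fderiv ℝ F (x t))) (F (x t))‖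
          ≤ C * Real.log k / (k : ℝ) ^ ((2 : ℝ) / 5) := by
  classical
  -- abbreviation for the gradient-like vector
  set g : ℕ → EuclideanSpace ℝ (Fin d) :=
    fun k => (ContinuousLinearMap.adjoint (fderiv ℝ F (x k))) (F (x k)) with hg
  -- Key per-step estimates
  have key : ∀ k : ℕ, ‖F (x (k+1))‖^2 + lam k * ‖x (k+1) - x k‖^2 ≤ ‖F (x k)‖^2 ∧
      ‖g k‖ ≤ (J^2 + lam k) * ‖x (k+1) - x k‖ := by
    intro k
    set A := fderiv ℝ F (x k) with hAk
    set f := F (x k) with hfk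
    set sk := x (k+1) - x k with hsk
    set l := lam k with hlk
    have hstepk : (ContinuousLinearMap.adjoint A) (A sk) + l • sk = -(g k) := hstep k
    have hlpos : 0 < l := hlampos k
    have hgnn : 0 ≤ c * ‖g k‖ := mul_nonneg hc.le (norm_nonneg _)
    have hl2 : l^2 = c * ‖g k‖ := by
      rw [hlk, hlam k]; exact Real.sq_sqrt hgnn
    have hkey : ‖A sk‖^2 + l * ‖sk‖^2 = - (inner ℝ (g k) sk : ℝ) := by
      have h := congrArg (fun v => (inner ℝ v sk : ℝ)) hstepk
      simp only [inner_add_left, real_inner_smul_left,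
        ContinuousLinearMap.adjoint_inner_left, real_inner_self_eq_norm_sq,
        inner_neg_left] at h
      linarith [h]
    have hCS : |(inner ℝ (g k) sk : ℝ)| ≤ ‖g k‖ * ‖sk‖ := abs_real_inner_le_norm (g k) sk
    have hsle : l * ‖sk‖^2 ≤ ‖g k‖ * ‖sk‖ := by
      have := neg_abs_le (inner ℝ (g k) sk : ℝ)
      nlinarith [sq_nonneg ‖A sk‖]
    have hexp : ‖f + A sk‖^2 = ‖f‖^2 - ‖A sk‖^2 - 2*(l * ‖sk‖^2) := by
      have h2 : (inner ℝ f (A sk) : ℝ) = inner ℝ (g k) sk :=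
        (ContinuousLinearMap.adjoint_inner_left A sk f).symm
      have h3 := norm_add_sq_real f (A sk)
      rw [h2] at h3
      linarith
    have hc3 : c * ‖sk‖^3 ≤ l * ‖sk‖^2 := by
      nlinarith [hsle, hl2, hlpos, norm_nonneg sk,
        mul_le_mul_of_nonneg_left hsle (mul_nonneg hc.le (norm_nonneg sk))]
    constructor
    · have h4 := hcub (x k) (x (k+1))
      rw [← hsk, ← hAk, ← hfk] at h4
      have : ‖F (x (k+1))‖^2 ≤ ‖f + A sk‖^2 + c * ‖sk‖^3 := h4
      nlinarith [sq_nonneg ‖A sk‖]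
    · have h5 : ‖g k‖ = ‖(ContinuousLinearMap.adjoint A) (A sk) + l • sk‖ := by
        rw [hstepk, norm_neg]
      have hadj : ‖(ContinuousLinearMap.adjoint A)‖ = ‖A‖ :=
        ContinuousLinearMap.adjoint.norm_map A
      have h6 : ‖(ContinuousLinearMap.adjoint A) (A sk)‖ ≤ J * (J * ‖sk‖) := by
        have h7 := (ContinuousLinearMap.adjoint A).le_opNorm (A sk)
        rw [hadj] at h7
        have h8 := A.le_opNorm sk
        have hb : ‖A‖ ≤ J := by rw [hAk]; exact hJbound (x k)
        have e2 : ‖A sk‖ ≤ J * ‖sk‖ :=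
          h8.trans (mul_le_mul_of_nonneg_right hb (norm_nonneg _))
        calc ‖(ContinuousLinearMap.adjoint A) (A sk)‖ ≤ ‖A‖ * ‖A sk‖ := h7
          _ ≤ J * ‖A sk‖ := mul_le_mul_of_nonneg_right hb (norm_nonneg _)
          _ ≤ J * (J * ‖sk‖) := mul_le_mul_of_nonneg_left e2 hJ.le
      calc ‖g k‖ = ‖(ContinuousLinearMap.adjoint A) (A sk) + l • sk‖ := h5
        _ ≤ ‖(ContinuousLinearMap.adjoint A) (A sk)‖ + ‖l • sk‖ := norm_add_le _ _
        _ ≤ J * (J * ‖sk‖) + l * ‖sk‖ := by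
            rw [norm_smul, Real.norm_eq_abs, abs_of_pos hlpos]
            linarith
        _ = (J^2 + l) * ‖sk‖ := by ring
  -- Part 1: monotonicity
  have mono : ∀ k, ‖F (x (k+1))‖ ≤ ‖F (x k)‖ := by
    intro k
    have h1 := (key k).1
    nlinarith [mul_nonneg (hlampos k).le (sq_nonneg ‖x (k+1) - x k‖),
      norm_nonneg (F (x (k+1))), norm_nonneg (F (x k))]
  refine ⟨mono, ?_⟩
  have hmono0 : ∀ k, ‖F (x k)‖ ≤ ‖F (x 0)‖ := by
    intro k
    induction k with
    | zero => exact le_refl _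
    | succ n ih => exact (mono n).trans ih
  set f0 := ‖F (x 0)‖ with hf0def
  have hf0 : 0 ≤ f0 := norm_nonneg _
  set Λ := Real.sqrt (c * (J * f0)) with hΛ
  have hΛnn : 0 ≤ Λ := Real.sqrt_nonneg _
  have hlamle : ∀ k, lam k ≤ Λ := by
    intro k
    rw [hlam k, hΛ]
    apply Real.sqrt_le_sqrt
    have h1 : ‖g k‖ ≤ J * f0 := by
      have h2 : ‖g k‖ ≤ ‖(ContinuousLinearMap.adjoint (fderiv ℝ F (x k)))‖ * ‖F (x k)‖ :=
        (ContinuousLinearMap.adjoint (fderiv ℝ F (x k))).le_opNorm (F (x k))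
      have hadj : ‖(ContinuousLinearMap.adjoint (fderiv ℝ F (x k)))‖ = ‖fderiv ℝ F (x k)‖ :=
        ContinuousLinearMap.adjoint.norm_map _
      rw [hadj] at h2
      have h3 := hJbound (x k)
      have h4 := hmono0 k
      nlinarith [norm_nonneg (F (x k)), (norm_nonneg (fderiv ℝ F (x k)))]
    exact mul_le_mul_of_nonneg_left h1 hc.le
  set B := J^2 + Λ with hB
  have hBpos : 0 < B := by positivity
  -- per-step decrease in terms of g
  have hdec : ∀ k, lam k * ‖g k‖^2 ≤ B^2 * (‖F (x k)‖^2 - ‖F (x (k+1))‖^2) := by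
    intro k
    obtain ⟨h1, h2⟩ := key k
    have h3 : ‖g k‖ ≤ B * ‖x (k+1) - x k‖ := by
      refine h2.trans ?_
      have := hlamle k
      nlinarith [norm_nonneg (x (k+1) - x k)]
    have h4 : ‖g k‖^2 ≤ B^2 * ‖x (k+1) - x k‖^2 := by
      nlinarith [norm_nonneg (g k), norm_nonneg (x (k+1) - x k), hBpos]
    nlinarith [hlampos k, mul_le_mul_of_nonneg_left h4 (hlampos k).le,
      mul_le_mul_of_nonneg_left h1 (sq_nonneg B)]
  -- telescoping sum
  have hsum : ∀ k : ℕ, ∑ t ∈ Finset.range (k+1), lam t * ‖g t‖^2 ≤ B^2 * f0^2 := by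
    intro k
    calc ∑ t ∈ Finset.range (k+1), lam t * ‖g t‖^2
        ≤ ∑ t ∈ Finset.range (k+1), B^2 * (‖F (x t)‖^2 - ‖F (x (t+1))‖^2) :=
          Finset.sum_le_sum fun t _ => hdec t
      _ = B^2 * (‖F (x 0)‖^2 - ‖F (x (k+1))‖^2) := by
          rw [← Finset.mul_sum, Finset.sum_range_sub' (fun t => ‖F (x t)‖^2)]
      _ ≤ B^2 * f0^2 := by nlinarith [sq_nonneg ‖F (x (k+1))‖, sq_nonneg B]
  -- the constant
  set K := (B^2 * f0^2)^2 / c with hK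
  have hKnn : 0 ≤ K := by positivity
  have hlog2 : 0 < Real.log 2 := Real.log_pos (by norm_num)
  refine ⟨(K ^ ((1:ℝ)/5) + 1) / Real.log 2, by positivity, ?_⟩
  intro k hk
  have hk0 : (0:ℝ) < k := by exact_mod_cast Nat.lt_of_lt_of_le (by norm_num) hk
  have hk1 : (0:ℝ) < (k:ℝ) + 1 := by linarith
  have hne : (Finset.range (k+1)).Nonempty := ⟨0, by simp⟩
  set M := B^2 * f0^2 / ((k:ℝ)+1) with hM
  have hMnn : 0 ≤ M := by positivity
  have hsum2 : ∑ t ∈ Finset.range (k+1), lam t * ‖g t‖^2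
      ≤ ∑ t ∈ Finset.range (k+1), M := by
    rw [Finset.sum_const, Finset.card_range, nsmul_eq_mul, hM]
    have : ((k+1 : ℕ) : ℝ) * (B^2 * f0^2 / ((k:ℝ)+1)) = B^2 * f0^2 := by
      push_cast
      field_simp
    rw [this]
    exact hsum k
  obtain ⟨t, ht, hle⟩ := Finset.exists_le_of_sum_le hne hsum2
  refine ⟨t, Finset.mem_range_succ_iff.mp ht, ?_⟩
  -- from lam t * ‖g t‖² ≤ M deduce c * ‖g t‖⁵ ≤ M²
  have hl2 : (lam t)^2 = c * ‖g t‖ := by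
    rw [hlam t]; exact Real.sq_sqrt (mul_nonneg hc.le (norm_nonneg _))
  have hunn : 0 ≤ lam t * ‖g t‖^2 := mul_nonneg (hlampos t).le (sq_nonneg _)
  have e5 : (lam t * ‖g t‖^2)^2 = c * ‖g t‖^5 := by
    have e : (lam t * ‖g t‖^2)^2 = (lam t)^2 * ‖g t‖^4 := by ring
    rw [e, hl2]; ring
  have h5 : c * ‖g t‖^5 ≤ M^2 := by
    nlinarith [mul_self_le_mul_self hunn hle, e5]
  have h6 : ‖g t‖^5 ≤ M^2 / c := by
    rw [le_div_iff₀ hc]; linarith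
  have h7 : ‖g t‖ ≤ (M^2 / c) ^ ((1:ℝ)/5) := by
    have h8 : ‖g t‖ = ((‖g t‖ ^ (5:ℕ) : ℝ)) ^ ((1:ℝ)/5) := by
      rw [← Real.rpow_natCast ‖g t‖ 5, ← Real.rpow_mul (norm_nonneg _)]
      norm_num
    rw [h8]
    exact Real.rpow_le_rpow (by positivity) h6 (by norm_num)
  have h9 : M^2 / c = K / ((k:ℝ)+1)^2 := by
    rw [hM, hK, div_pow, div_div, div_div, mul_comm (((k:ℝ)+1)^2) c]
  have h10 : (M^2 / c) ^ ((1:ℝ)/5) = K ^ ((1:ℝ)/5) / (((k:ℝ)+1)^2) ^ ((1:ℝ)/5) := by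
    rw [h9, Real.div_rpow hKnn (by positivity)]
  have h11 : (((k:ℝ)+1)^2) ^ ((1:ℝ)/5) = ((k:ℝ)+1) ^ ((2:ℝ)/5) := by
    rw [← Real.rpow_natCast ((k:ℝ)+1) 2, ← Real.rpow_mul (by linarith)]
    norm_num
  have hkr : (0:ℝ) < (k:ℝ) ^ ((2:ℝ)/5) := Real.rpow_pos_of_pos hk0 _
  have hkr1 : (k:ℝ) ^ ((2:ℝ)/5) ≤ ((k:ℝ)+1) ^ ((2:ℝ)/5) :=
    Real.rpow_le_rpow hk0.le (by linarith) (by norm_num)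
  have h12 : ‖g t‖ ≤ K ^ ((1:ℝ)/5) / (k:ℝ) ^ ((2:ℝ)/5) := by
    rw [h10, h11] at h7
    refine h7.trans ?_
    apply div_le_div_of_nonneg_left (by positivity) hkr hkr1
  refine h12.trans ?_
  -- final: K^{1/5}/k^{2/5} ≤ C log k / k^{2/5}
  have hlogk : Real.log 2 ≤ Real.log k := Real.log_le_log (by norm_num) (by exact_mod_cast hk)
  have hC : K ^ ((1:ℝ)/5) ≤ (K ^ ((1:ℝ)/5) + 1) / Real.log 2 * Real.log k := by
    have h13 : (K ^ ((1:ℝ)/5) + 1) / Real.log 2 * Real.log 2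
        ≤ (K ^ ((1:ℝ)/5) + 1) / Real.log 2 * Real.log k :=
      mul_le_mul_of_nonneg_left hlogk (by positivity)
    rw [div_mul_cancel₀ _ hlog2.ne'] at h13
    have : (0:ℝ) ≤ K ^ ((1:ℝ)/5) := by positivity
    linarith
  exact (div_le_div_iff_of_pos_right hkr).mpr hC
end

section
/- Let F : ℝ^d → ℝ^m be differentiable with Jacobian ∂F, let c > 0, and assume the cubic growth bound ‖F(y)‖² ≤ ‖F(x) + ∂F(x)(y − x)‖² + c‖y − x‖³ for all x, y ∈ ℝ^d. Let {x^k}_{k≥0} satisfy, for every k, (J_k^T J_k + λ_k·I)(x^{k+1} − x^k) = −J_k^T F(x^k), where J_k = ∂F(x^k) and λ_k = √(c‖J_k^T F(x^k)‖) > 0. Then for every k ≥ 0, ‖F(x^{k+1})‖² ≤ ‖F(x⁰)‖² − Σ_{t=0}^{k} λ_t ‖x^{t+1} − x^t‖². -/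
open RealInnerProductSpace

/-- Telescoped LM descent: under the cubic growth bound,
`‖F(x^{k+1})‖² ≤ ‖F(x⁰)‖² − Σ_{t=0}^{k} λ_t ‖x^{t+1} − x^t‖²`. -/
theorem stmt_19 {d m : ℕ}
    (F : EuclideanSpace ℝ (Fin d) → EuclideanSpace ℝ (Fin m))
    (hF : Differentiable ℝ F)
    (c : ℝ) (hc : 0 < c)
    (hcub : ∀ x y : EuclideanSpace ℝ (Fin d),
      ‖F y‖ ^ 2 ≤ ‖F x + (fderiv ℝ F x) (y - x)‖ ^ 2 + c * ‖y - x‖ ^ 3)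
    (x : ℕ → EuclideanSpace ℝ (Fin d))
    (lam : ℕ → ℝ)
    (hlam : ∀ k, lam k
      = Real.sqrt (c * ‖(ContinuousLinearMap.adjoint (fderiv ℝ F (x k))) (F (x k))‖))
    (hlampos : ∀ k, 0 < lam k)
    (hstep : ∀ k,
      (ContinuousLinearMap.adjoint (fderiv ℝ F (x k))) ((fderiv ℝ F (x k)) (x (k + 1) - x k))
        + lam k • (x (k + 1) - x k)
      = -(ContinuousLinearMap.adjoint (fderiv ℝ F (x k))) (F (x k))) :
    ∀ k : ℕ, ‖F (x (k + 1))‖ ^ 2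
      ≤ ‖F (x 0)‖ ^ 2 - ∑ t ∈ Finset.range (k + 1), lam t * ‖x (t + 1) - x t‖ ^ 2 := by
  have key : ∀ k, ‖F (x (k + 1))‖ ^ 2
      ≤ ‖F (x k)‖ ^ 2 - lam k * ‖x (k + 1) - x k‖ ^ 2 := by
    intro k
    set J := fderiv ℝ F (x k) with hJ
    set h := x (k + 1) - x k with hh
    set g := (ContinuousLinearMap.adjoint J) (F (x k)) with hg
    have hs : (ContinuousLinearMap.adjoint J) (J h) + lam k • h = -g := hstep k
    have h2 : ⟪-g, h⟫ = ‖J h‖ ^ 2 + lam k * ‖h‖ ^ 2 := by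
      rw [← hs, inner_add_left, ContinuousLinearMap.adjoint_inner_left,
        real_inner_smul_left, real_inner_self_eq_norm_sq, real_inner_self_eq_norm_sq]
    -- inner product identity
    have hinner : ⟪F (x k), J h⟫ = -(‖J h‖ ^ 2 + lam k * ‖h‖ ^ 2) := by
      have h1 : ⟪F (x k), J h⟫ = ⟪g, h⟫ := by
        rw [hg, ContinuousLinearMap.adjoint_inner_left]
      have h3 : ⟪-g, h⟫ = -⟪g, h⟫ := inner_neg_left g h
      rw [h1]; linarith [h2, h3]
    -- expand the squared norm
    have hexp : ‖F (x k) + J h‖ ^ 2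
        = ‖F (x k)‖ ^ 2 - ‖J h‖ ^ 2 - 2 * lam k * ‖h‖ ^ 2 := by
      rw [norm_add_sq_real, hinner]; ring
    -- lam k * ‖h‖ ≤ ‖g‖
    have hlamh : lam k * ‖h‖ ≤ ‖g‖ := by
      rcases eq_or_ne h 0 with h0 | h0
      · rw [h0, norm_zero, mul_zero]; positivity
      · have hCS : ⟪-g, h⟫ ≤ ‖g‖ * ‖h‖ := by
          calc ⟪-g, h⟫ ≤ ‖(-g : EuclideanSpace ℝ (Fin d))‖ * ‖h‖ := real_inner_le_norm _ _
          _ = ‖g‖ * ‖h‖ := by rw [norm_neg]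
        have hhn : (0:ℝ) < ‖h‖ := norm_pos_iff.mpr h0
        have h4 : lam k * ‖h‖ * ‖h‖ ≤ ‖g‖ * ‖h‖ := by nlinarith [sq_nonneg ‖J h‖]
        exact (mul_le_mul_iff_of_pos_right hhn).mp h4
    -- c * ‖h‖ ≤ lam k
    have hch : c * ‖h‖ ≤ lam k := by
      have hsq : lam k ^ 2 = c * ‖g‖ := by
        rw [hlam k, Real.sq_sqrt]; positivity
      have hlk := hlampos k
      nlinarith [mul_le_mul_of_nonneg_left hlamh hc.le]
    have hcube : c * ‖h‖ ^ 3 ≤ lam k * ‖h‖ ^ 2 :=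
      calc c * ‖h‖ ^ 3 = (c * ‖h‖) * ‖h‖ ^ 2 := by ring
      _ ≤ lam k * ‖h‖ ^ 2 := mul_le_mul_of_nonneg_right hch (sq_nonneg _)
    have hcub' := hcub (x k) (x (k + 1))
    rw [← hh, ← hJ] at hcub'
    have hJn := sq_nonneg ‖J h‖
    linarith [hcub', hexp, hcube, hJn]
  intro k
  induction k with
  | zero => simpa using key 0
  | succ n ih =>
    rw [Finset.sum_range_succ]
    have := key (n + 1)
    linarith
end
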